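/- Let n ≥ 1 and let f : ℝ₍₎₀ⁿ → ℝ₍₎₀ⁿ be monotone and positively homogeneous. Then the following are equivalent: (a) there is no pair (I, J) of disjoint subsets of {1,…,n} such that I is a multiplicative MIN-dominion for f and J is a multiplicative MAX-dominion for f; (b) for every d ∈ ℝ₍₎₀ⁿ, the map x ↦ (d_1·f_1(x), …, d_n·f_n(x)) has a positive eigenvector, i.e., there exist λ > 0 and u ∈ ℝ₍₎₀ⁿ with d_i·f_i(u) = λ·u_i for all i. -/

import Mathlib

open Filter Real Set


/-- `Δ` is a multiplicative MIN-dominion for `f`. -/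
def MultMinDominion (n : ℕ) (f : (Fin n → ℝ) → (Fin n → ℝ)) (Δ : Set (Fin n)) : Prop :=
  Δ.Nonempty ∧ ∃ C : ℝ, ∀ i ∈ Δ, ∀ t : ℝ, 0 ≤ t →
    f (fun j => Real.exp (Δᶜ.indicator (fun _ => t) j)) i ≤ C

/-- `Δ` is a multiplicative MAX-dominion for `f`. -/
def MultMaxDominion (n : ℕ) (f : (Fin n → ℝ) → (Fin n → ℝ)) (Δ : Set (Fin n)) : Prop :=
  Δ.Nonempty ∧ ∃ c : ℝ, 0 < c ∧ ∀ i ∈ Δ, ∀ t : ℝ, 0 ≤ t →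
    c ≤ f (fun j => Real.exp (Δᶜ.indicator (fun _ => -t) j)) i

namespace Stmt17Aux

variable {n : ℕ}

/-- nonempty univ finset for `Fin n` when `0 < n`. -/
def hneF (hn : 0 < n) : (Finset.univ : Finset (Fin n)).Nonempty :=
  ⟨⟨0, hn⟩, Finset.mem_univ _⟩

noncomputable def mxv (hn : 0 < n) (x : Fin n → ℝ) : ℝ :=
  Finset.univ.sup' (hneF hn) x

noncomputable def mnv (hn : 0 < n) (x : Fin n → ℝ) : ℝ :=
  Finset.univ.inf' (hneF hn) x

lemma le_mxv (hn : 0 < n) (x : Fin n → ℝ) (i : Fin n) : x i ≤ mxv hn x :=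
  Finset.le_sup' x (Finset.mem_univ i)

lemma mnv_le (hn : 0 < n) (x : Fin n → ℝ) (i : Fin n) : mnv hn x ≤ x i :=
  Finset.inf'_le x (Finset.mem_univ i)

lemma exists_mxv (hn : 0 < n) (x : Fin n → ℝ) : ∃ i, mxv hn x = x i := by
  obtain ⟨i, -, h⟩ := Finset.exists_mem_eq_sup' (hneF hn) x
  exact ⟨i, h⟩

lemma exists_mnv (hn : 0 < n) (x : Fin n → ℝ) : ∃ i, mnv hn x = x i := by
  obtain ⟨i, -, h⟩ := Finset.exists_mem_eq_inf' (hneF hn) x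
  exact ⟨i, h⟩

lemma mxv_le (hn : 0 < n) (x : Fin n → ℝ) (c : ℝ) (h : ∀ i, x i ≤ c) : mxv hn x ≤ c :=
  Finset.sup'_le _ _ fun i _ => h i

lemma le_mnv (hn : 0 < n) (x : Fin n → ℝ) (c : ℝ) (h : ∀ i, c ≤ x i) : c ≤ mnv hn x :=
  Finset.le_inf' _ _ fun i _ => h i

lemma mnv_le_mxv (hn : 0 < n) (x : Fin n → ℝ) : mnv hn x ≤ mxv hn x :=
  le_trans (mnv_le hn x ⟨0, hn⟩) (le_mxv hn x ⟨0, hn⟩)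

noncomputable def omv (hn : 0 < n) (x : Fin n → ℝ) : ℝ := mxv hn x - mnv hn x

lemma omv_nonneg (hn : 0 < n) (x : Fin n → ℝ) : 0 ≤ omv hn x :=
  sub_nonneg.2 (mnv_le_mxv hn x)

lemma sub_le_omv (hn : 0 < n) (x : Fin n → ℝ) (i j : Fin n) : x i - x j ≤ omv hn x :=
  sub_le_sub (le_mxv hn x i) (mnv_le hn x j)

lemma abs_le_omv (hn : 0 < n) (x : Fin n → ℝ) (i0 : Fin n) (h0 : x i0 = 0) (i : Fin n) :
    |x i| ≤ omv hn x := by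
  rcases abs_cases (x i) with ⟨he, -⟩ | ⟨he, -⟩ <;> rw [he]
  · have := sub_le_omv hn x i i0; rw [h0] at this; linarith
  · have := sub_le_omv hn x i0 i; rw [h0] at this; linarith

lemma omv_add_le (hn : 0 < n) (x y : Fin n → ℝ) :
    omv hn (fun i => x i + y i) ≤ omv hn x + omv hn y := by
  have h1 : mxv hn (fun i => x i + y i) ≤ mxv hn x + mxv hn y :=
    mxv_le hn _ _ fun i => add_le_add (le_mxv hn x i) (le_mxv hn y i)
  have h2 : mnv hn x + mnv hn y ≤ mnv hn (fun i => x i + y i) :=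
    le_mnv hn _ _ fun i => add_le_add (mnv_le hn x i) (mnv_le hn y i)
  simp only [omv]; linarith

lemma omv_neg (hn : 0 < n) (x : Fin n → ℝ) : omv hn (fun i => -(x i)) = omv hn x := by
  have h1 : mxv hn (fun i => -(x i)) = -(mnv hn x) := by
    apply le_antisymm
    · exact mxv_le hn _ _ fun i => by have := mnv_le hn x i; linarith
    · obtain ⟨i, hi⟩ := exists_mnv hn x
      rw [hi]; exact le_mxv hn (fun i => -(x i)) i
  have h2 : mnv hn (fun i => -(x i)) = -(mxv hn x) := by
    apply le_antisymm
    · obtain ⟨i, hi⟩ := exists_mxv hn x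
      rw [hi]; exact mnv_le hn (fun i => -(x i)) i
    · exact le_mnv hn _ _ fun i => by have := le_mxv hn x i; linarith
  simp only [omv, h1, h2]; ring

lemma omv_sub_le (hn : 0 < n) (x y : Fin n → ℝ) :
    omv hn (fun i => x i - y i) ≤ omv hn x + omv hn y := by
  have := omv_add_le hn x (fun i => -(y i))
  simp only [omv_neg] at this
  simpa [sub_eq_add_neg] using this

lemma omv_smul (hn : 0 < n) (c : ℝ) (hc : 0 ≤ c) (x : Fin n → ℝ) :
    omv hn (fun i => c * x i) = c * omv hn x := by
  have h1 : mxv hn (fun i => c * x i) = c * mxv hn x := by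
    apply le_antisymm
    · exact mxv_le hn _ _ fun i => mul_le_mul_of_nonneg_left (le_mxv hn x i) hc
    · obtain ⟨i, hi⟩ := exists_mxv hn x
      rw [hi]; exact le_mxv hn (fun i => c * x i) i
  have h2 : mnv hn (fun i => c * x i) = c * mnv hn x := by
    apply le_antisymm
    · obtain ⟨i, hi⟩ := exists_mnv hn x
      rw [hi]; exact mnv_le hn (fun i => c * x i) i
    · exact le_mnv hn _ _ fun i => mul_le_mul_of_nonneg_left (mnv_le hn x i) hc
  simp only [omv, h1, h2]; ring

lemma omv_const_shift (hn : 0 < n) (x : Fin n → ℝ) (c : ℝ) :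
    omv hn (fun i => x i + c) = omv hn x := by
  have h1 : mxv hn (fun i => x i + c) = mxv hn x + c := by
    apply le_antisymm
    · exact mxv_le hn _ _ fun i => by have := le_mxv hn x i; linarith
    · obtain ⟨i, hi⟩ := exists_mxv hn x
      rw [hi]; exact le_mxv hn (fun i => x i + c) i
  have h2 : mnv hn (fun i => x i + c) = mnv hn x + c := by
    apply le_antisymm
    · obtain ⟨i, hi⟩ := exists_mnv hn x
      rw [hi]; exact mnv_le hn (fun i => x i + c) i
    · exact le_mnv hn _ _ fun i => by have := mnv_le hn x i; linarith
  simp only [omv, h1, h2]; ring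

lemma omv_le_two_sum (hn : 0 < n) (x : Fin n → ℝ) :
    omv hn x ≤ 2 * ∑ i, |x i| := by
  have hs : ∀ i, |x i| ≤ ∑ j, |x j| := fun i =>
    Finset.single_le_sum (fun j _ => abs_nonneg (x j)) (Finset.mem_univ i)
  have h1 : mxv hn x ≤ ∑ j, |x j| :=
    mxv_le hn _ _ fun i => le_trans (le_abs_self _) (hs i)
  have h2 : -(∑ j, |x j|) ≤ mnv hn x :=
    le_mnv hn _ _ fun i => by have := hs i; have := neg_abs_le (x i); linarith
  simp only [omv]; linarith

lemma tendsto_omv_zero (hn : 0 < n) (w : ℕ → Fin n → ℝ)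
    (h : ∀ i, Tendsto (fun k => w k i) atTop (nhds 0)) :
    Tendsto (fun k => omv hn (w k)) atTop (nhds 0) := by
  have hsum : Tendsto (fun k => 2 * ∑ i, |w k i|) atTop (nhds 0) := by
    have : Tendsto (fun k => ∑ i, |w k i|) atTop (nhds 0) := by
      have := tendsto_finset_sum (Finset.univ : Finset (Fin n))
        (fun i _ => ((h i).abs : Tendsto (fun k => |w k i|) atTop (nhds |0|)))
      simpa using this
    simpa using this.const_mul 2
  apply squeeze_zero (fun k => omv_nonneg hn (w k)) (fun k => omv_le_two_sum hn (w k)) hsum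


/-- From `∀ A ∃ m, b m < -A`, values below any bound occur beyond any index. -/
lemma unbdd_tail (b : ℕ → ℝ) (h : ∀ A : ℝ, ∃ m, b m < -A) (N : ℕ) (A : ℝ) :
    ∃ m, N ≤ m ∧ b m < -A := by
  set A' : ℝ := |A| + ∑ k ∈ Finset.range N, |b k| with hA'
  obtain ⟨m, hm⟩ := h A'
  have hsum : ∀ k < N, -A' ≤ b k := by
    intro k hk
    have h1 : |b k| ≤ ∑ k ∈ Finset.range N, |b k| :=
      Finset.single_le_sum (fun j _ => abs_nonneg (b j)) (Finset.mem_range.2 hk)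
    have := neg_abs_le (b k)
    have := abs_nonneg A
    simp only [hA']; linarith
  have hmN : N ≤ m := by
    by_contra hc
    push_neg at hc
    exact absurd (hsum m hc) (by linarith)
  have : -A' ≤ -A := by
    have : A ≤ |A| := le_abs_self A
    have : 0 ≤ ∑ k ∈ Finset.range N, |b k| :=
      Finset.sum_nonneg fun j _ => abs_nonneg (b j)
    simp only [hA']; linarith [le_abs_self A]
  exact ⟨m, hmN, by linarith⟩

/-- Dichotomy for a real sequence: bounded below, or a subsequence tending to -∞. -/
lemma dichot (b : ℕ → ℝ) :
    (∃ A : ℝ, ∀ m, -A ≤ b m) ∨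
    (∃ ψ : ℕ → ℕ, StrictMono ψ ∧ Tendsto (b ∘ ψ) atTop atBot) := by
  by_cases h : ∃ A : ℝ, ∀ m, -A ≤ b m
  · exact Or.inl h
  · right
    push_neg at h
    have h' : ∀ A : ℝ, ∃ m, b m < -A := fun A => h A
    -- build subsequence
    have hrec : ∀ (N : ℕ) (A : ℝ), ∃ m, N ≤ m ∧ b m < -A := unbdd_tail b h'
    choose g hg1 hg2 using hrec
    let ψ : ℕ → ℕ := fun k => Nat.rec (g 0 0) (fun k ih => g (ih + 1) (k + 1)) k
    have hψsucc : ∀ k, ψ (k + 1) = g (ψ k + 1) (k + 1) := fun k => rfl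
    have hmono : StrictMono ψ := strictMono_nat_of_lt_succ (by
      intro k
      rw [hψsucc]
      have := hg1 (ψ k + 1) ((k : ℝ) + 1)
      omega)
    refine ⟨ψ, hmono, ?_⟩
    have hval : ∀ k, b (ψ k) < -(k : ℝ) := by
      intro k
      cases k with
      | zero => show b (g 0 0) < _; simpa using hg2 0 0
      | succ k =>
        rw [hψsucc]
        have := hg2 (ψ k + 1) ((k : ℝ) + 1)
        simpa [Nat.cast_succ] using this
    rw [tendsto_atBot]
    intro B
    rw [eventually_atTop]
    obtain ⟨M, hM⟩ := exists_nat_ge (-B)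
    refine ⟨M, fun k hk => ?_⟩
    have : b (ψ k) < -(k : ℝ) := hval k
    have : -(k : ℝ) ≤ -(M : ℝ) := by exact_mod_cast neg_le_neg (by exact_mod_cast hk)
    simp only [Function.comp]
    linarith

/-- Iterated extraction over a list of coordinates. -/
lemma ext_aux {n : ℕ} (L : List (Fin n)) (a : ℕ → Fin n → ℝ) :
    ∃ φ : ℕ → ℕ, StrictMono φ ∧ ∀ i ∈ L,
      (∃ A : ℝ, ∀ m, -A ≤ a (φ m) i) ∨ Tendsto (fun m => a (φ m) i) atTop atBot := by
  induction L with
  | nil => exact ⟨id, strictMono_id, by simp⟩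
  | cons i L ih =>
    obtain ⟨φ, hφ, hL⟩ := ih
    rcases dichot (fun m => a (φ m) i) with ⟨A, hA⟩ | ⟨ψ, hψ, htd⟩
    · refine ⟨φ, hφ, ?_⟩
      intro j hj
      rcases List.mem_cons.1 hj with rfl | hj
      · exact Or.inl ⟨A, hA⟩
      · exact hL j hj
    · refine ⟨φ ∘ ψ, hφ.comp hψ, ?_⟩
      intro j hj
      rcases List.mem_cons.1 hj with rfl | hj
      · exact Or.inr htd
      · rcases hL j hj with ⟨A, hA⟩ | htd'
        · exact Or.inl ⟨A, fun m => hA (ψ m)⟩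
        · exact Or.inr (htd'.comp hψ.tendsto_atTop)

/-- pigeonhole: a `Fin n`-valued sequence takes some value infinitely often. -/
lemma pigeon {n : ℕ} (g : ℕ → Fin n) (hn : 0 < n) : ∃ i : Fin n, ∀ N, ∃ m, N ≤ m ∧ g m = i := by
  by_contra hc
  push_neg at hc
  choose N hN using hc
  set M : ℕ := Finset.univ.sup N with hM
  exact hN (g M) M (Finset.le_sup (Finset.mem_univ (g M))) rfl

/-- Main extraction lemma. -/
lemma ext1 {n : ℕ} (hn : 0 < n) (a : ℕ → Fin n → ℝ)
    (h0 : ∀ m i, a m i ≤ 0) (hattain : ∀ m, ∃ i, a m i = 0) :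
    ∃ (J : Set (Fin n)) (A : ℝ) (φ : ℕ → ℕ), StrictMono φ ∧ J.Nonempty ∧
      (∀ j ∈ J, ∀ m, -A ≤ a (φ m) j) ∧
      (∀ i ∉ J, Tendsto (fun m => a (φ m) i) atTop atBot) := by
  obtain ⟨φ, hφ, hL⟩ := ext_aux (List.finRange n) a
  have hLmem : ∀ i : Fin n, i ∈ List.finRange n := List.mem_finRange
  set J : Set (Fin n) := {i | ∃ A : ℝ, ∀ m, -A ≤ a (φ m) i} with hJ
  -- uniform bound on J
  have hAex : ∀ i : Fin n, ∃ A : ℝ, i ∈ J → ∀ m, -A ≤ a (φ m) i := by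
    intro i
    by_cases hi : i ∈ J
    · obtain ⟨A, hA⟩ := hi; exact ⟨A, fun _ => hA⟩
    · exact ⟨0, fun h => absurd h hi⟩
  choose Af hAf using hAex
  refine ⟨J, ∑ i, |Af i|, φ, hφ, ?_, ?_, ?_⟩
  · -- nonempty
    choose g hg using fun m => hattain (φ m)
    obtain ⟨i, hi⟩ := pigeon g hn
    refine ⟨i, ?_⟩
    rcases hL i (hLmem i) with hb | htd
    · exact hb
    · exfalso
      have h1 : ∀ᶠ m in atTop, a (φ m) i ≤ -1 := htd.eventually (eventually_le_atBot (-1))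
      rw [eventually_atTop] at h1
      obtain ⟨N, hN⟩ := h1
      obtain ⟨m, hm, hgm⟩ := hi N
      have := hN m hm
      rw [← hgm] at this
      rw [hg m] at this
      linarith
  · intro j hj m
    have h1 : -(∑ i, |Af i|) ≤ -(|Af j|) := by
      have : |Af j| ≤ ∑ i, |Af i| :=
        Finset.single_le_sum (fun i _ => abs_nonneg (Af i)) (Finset.mem_univ j)
      linarith
    have h2 : -(|Af j|) ≤ -(Af j) := by
      have := le_abs_self (Af j); linarith
    exact le_trans (le_trans h1 h2) (hAf j hj m)
  · intro i hi
    rcases hL i (hLmem i) with hb | htd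
    · exact absurd hb hi
    · exact htd


section FixedPoint

variable {n : ℕ}

/-- Fixed point of the scaled normalized map `y ↦ s • T y`. -/
lemma scaled_fixed (hn : 0 < n) (G : (Fin n → ℝ) → Fin n → ℝ)
    (hmono : ∀ x y : Fin n → ℝ, (∀ i, x i ≤ y i) → ∀ i, G x i ≤ G y i)
    (hadd : ∀ (c : ℝ) (x : Fin n → ℝ) (i : Fin n), G (fun j => x j + c) i = G x i + c)
    (s : ℝ) (hs0 : 0 < s) (hs1 : s < 1) :
    ∃ y : Fin n → ℝ, y ⟨0, hn⟩ = 0 ∧ ∀ i, y i = s * (G y i - G y ⟨0, hn⟩) := by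
  set i0 : Fin n := ⟨0, hn⟩ with hi0
  set T : (Fin n → ℝ) → Fin n → ℝ := fun u i => G u i - G u i0 with hT
  -- comparison lemmas
  have hup : ∀ x y : Fin n → ℝ, ∀ i, G x i - G y i ≤ mxv hn (fun j => x j - y j) := by
    intro x y i
    have h1 : ∀ j, x j ≤ y j + mxv hn (fun j => x j - y j) := by
      intro j
      have := le_mxv hn (fun j => x j - y j) j
      linarith
    have := hmono x (fun j => y j + mxv hn (fun j => x j - y j)) h1 i
    rw [hadd] at this
    linarith
  have hdn : ∀ x y : Fin n → ℝ, ∀ i, mnv hn (fun j => x j - y j) ≤ G x i - G y i := by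
    intro x y i
    have h1 : ∀ j, y j ≤ x j + -(mnv hn (fun j => x j - y j)) := by
      intro j
      have := mnv_le hn (fun j => x j - y j) j
      linarith
    have := hmono y (fun j => x j + -(mnv hn (fun j => x j - y j))) h1 i
    rw [hadd] at this
    linarith
  have omv_G : ∀ x y : Fin n → ℝ,
      omv hn (fun i => G x i - G y i) ≤ omv hn (fun i => x i - y i) := by
    intro x y
    have h1 : mxv hn (fun i => G x i - G y i) ≤ mxv hn (fun i => x i - y i) :=
      mxv_le hn _ _ fun i => le_trans (hup x y i) le_rfl
    have h2 : mnv hn (fun i => x i - y i) ≤ mnv hn (fun i => G x i - G y i) :=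
      le_mnv hn _ _ fun i => hdn x y i
    simp only [omv]; linarith
  have omv_T : ∀ x y : Fin n → ℝ,
      omv hn (fun i => T x i - T y i) ≤ omv hn (fun i => x i - y i) := by
    intro x y
    have he : (fun i => T x i - T y i)
        = (fun i => (G x i - G y i) + (G y i0 - G x i0)) := by
      funext i; simp only [hT]; ring
    rw [he, omv_const_shift hn (fun i => G x i - G y i) (G y i0 - G x i0)]
    exact omv_G x y
  -- iteration
  set z : ℕ → Fin n → ℝ := fun k => Nat.rec (fun _ => 0) (fun _ zk i => s * T zk i) k with hz
  have hz0 : z 0 = fun _ => (0:ℝ) := rfl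
  have hzs : ∀ k, z (k + 1) = fun i => s * T (z k) i := fun k => rfl
  have hTi0 : ∀ u, T u i0 = 0 := fun u => by simp [hT]
  have hzi0 : ∀ k, z k i0 = 0 := by
    intro k
    cases k with
    | zero => rfl
    | succ k => rw [hzs k]; simp [hTi0]
  set C0 : ℝ := omv hn (fun i => z 1 i - z 0 i) with hC0
  have hC0nn : 0 ≤ C0 := omv_nonneg hn _
  have hcontr : ∀ k, omv hn (fun i => z (k + 1) i - z k i) ≤ s ^ k * C0 := by
    intro k
    induction k with
    | zero => simp [hC0]
    | succ k ih =>
      have he : (fun i => z (k + 2) i - z (k + 1) i)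
          = (fun i => s * (T (z (k + 1)) i - T (z k) i)) := by
        funext i; rw [hzs (k+1), hzs k]; ring
      rw [he, omv_smul hn s (le_of_lt hs0)]
      calc s * omv hn (fun i => T (z (k + 1)) i - T (z k) i)
          ≤ s * omv hn (fun i => z (k + 1) i - z k i) :=
            mul_le_mul_of_nonneg_left (omv_T _ _) (le_of_lt hs0)
        _ ≤ s * (s ^ k * C0) := mul_le_mul_of_nonneg_left ih (le_of_lt hs0)
        _ = s ^ (k + 1) * C0 := by ring
  -- per-coordinate Cauchy sequence
  have hdist : ∀ i k, dist (z k i) (z (k + 1) i) ≤ C0 * s ^ k := by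
    intro i k
    rw [Real.dist_eq]
    have h1 : (fun j => z k j - z (k + 1) j) i0 = 0 := by
      have h0' : z k i0 - z (k + 1) i0 = 0 := by rw [hzi0 k, hzi0 (k+1)]; ring
      simpa using h0'
    have h2 := abs_le_omv hn (fun j => z k j - z (k + 1) j) i0 h1 i
    have h3 : omv hn (fun j => z k j - z (k + 1) j) = omv hn (fun j => z (k + 1) j - z k j) := by
      rw [show (fun j => z k j - z (k + 1) j) = (fun j => -((fun l => z (k+1) l - z k l) j)) by
        funext j; ring]
      exact omv_neg hn _
    rw [h3] at h2
    calc |z k i - z (k + 1) i| ≤ omv hn (fun j => z (k + 1) j - z k j) := h2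
      _ ≤ s ^ k * C0 := hcontr k
      _ = C0 * s ^ k := by ring
  have hcauchy : ∀ i, CauchySeq (fun k => z k i) := fun i =>
    cauchySeq_of_le_geometric s C0 hs1 (hdist i)
  have hlim : ∀ i, ∃ L : ℝ, Tendsto (fun k => z k i) atTop (nhds L) := fun i =>
    cauchySeq_tendsto_of_complete (hcauchy i)
  choose Y hY using hlim
  have hYi0 : Y i0 = 0 := by
    have h1 : Tendsto (fun k => z k i0) atTop (nhds 0) := by
      simp only [hzi0]; exact tendsto_const_nhds
    exact tendsto_nhds_unique (hY i0) h1
  -- continuity of G along the sequence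
  have hGlipsum : ∀ x y : Fin n → ℝ, ∀ i, |G x i - G y i| ≤ ∑ j, |x j - y j| := by
    intro x y i
    have hs1' : ∀ j, |x j - y j| ≤ ∑ l, |x l - y l| := fun j =>
      Finset.single_le_sum (f := fun l => |x l - y l|) (fun l _ => abs_nonneg _)
        (Finset.mem_univ j)
    have h1 : G x i - G y i ≤ ∑ l, |x l - y l| :=
      le_trans (hup x y i) (mxv_le hn _ _ fun j => le_trans (le_abs_self _) (hs1' j))
    have h2 : -(∑ l, |x l - y l|) ≤ G x i - G y i := by
      refine le_trans ?_ (hdn x y i)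
      refine le_mnv hn _ _ fun j => ?_
      have := hs1' j
      have := neg_abs_le (x j - y j)
      linarith
    rw [abs_le]; constructor <;> linarith
  have hGtend : ∀ i, Tendsto (fun k => G (z k) i) atTop (nhds (G Y i)) := by
    intro i
    have hsum : Tendsto (fun k => ∑ j, |z k j - Y j|) atTop (nhds 0) := by
      have hc : ∀ j : Fin n, Tendsto (fun k => |z k j - Y j|) atTop (nhds 0) := by
        intro j
        have h1 : Tendsto (fun k => z k j - Y j) atTop (nhds 0) := by
          simpa using (hY j).sub (tendsto_const_nhds : Tendsto (fun _ : ℕ => Y j) atTop _)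
        simpa using h1.abs
      have := tendsto_finset_sum (Finset.univ : Finset (Fin n)) (fun j _ => hc j)
      simpa using this
    have h0 : Tendsto (fun k => G (z k) i - G Y i) atTop (nhds 0) :=
      squeeze_zero_norm (fun k => hGlipsum (z k) Y i) hsum
    have := h0.add_const (G Y i)
    simpa using this
  have hfix : ∀ i, Y i = s * (G Y i - G Y i0) := by
    intro i
    have h1 : Tendsto (fun k => z (k + 1) i) atTop (nhds (Y i)) :=
      (hY i).comp (tendsto_add_atTop_nat 1)
    have h2 : Tendsto (fun k => z (k + 1) i) atTop (nhds (s * (G Y i - G Y i0))) := by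
      have he : ∀ k, z (k + 1) i = s * (G (z k) i - G (z k) i0) := by
        intro k; rw [hzs k]
      simp only [he]
      exact (((hGtend i).sub (hGtend i0)).const_mul s)
    exact tendsto_nhds_unique h1 h2
  exact ⟨Y, hYi0, hfix⟩

end FixedPoint

/-- If the normalized slice is bounded, the topical map `G` has an additive eigenvector. -/
lemma eigen_of_bounded (hn : 0 < n) (G : (Fin n → ℝ) → Fin n → ℝ)
    (hmono : ∀ x y : Fin n → ℝ, (∀ i, x i ≤ y i) → ∀ i, G x i ≤ G y i)
    (hadd : ∀ (c : ℝ) (x : Fin n → ℝ) (i : Fin n), G (fun j => x j + c) i = G x i + c)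
    (lam mu R : ℝ)
    (hlam : ∀ i, lam ≤ G (fun _ => 0) i) (hmu : ∀ i, G (fun _ => 0) i ≤ mu)
    (hR : ∀ x : Fin n → ℝ, x ⟨0, hn⟩ = 0 → (∀ i, lam ≤ G x i - x i) →
        (∀ i, G x i - x i ≤ mu) → ∀ i, |x i| ≤ R) :
    ∃ v : Fin n → ℝ, ∀ i, G v i = v i + G v ⟨0, hn⟩ := by
  set i0 : Fin n := ⟨0, hn⟩ with hi0
  -- comparison lemmas
  have hup : ∀ x y : Fin n → ℝ, ∀ i, G x i - G y i ≤ mxv hn (fun j => x j - y j) := by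
    intro x y i
    have h1 : ∀ j, x j ≤ y j + mxv hn (fun j => x j - y j) := by
      intro j
      have := le_mxv hn (fun j => x j - y j) j
      linarith
    have := hmono x (fun j => y j + mxv hn (fun j => x j - y j)) h1 i
    rw [hadd] at this
    linarith
  have hdn : ∀ x y : Fin n → ℝ, ∀ i, mnv hn (fun j => x j - y j) ≤ G x i - G y i := by
    intro x y i
    have h1 : ∀ j, y j ≤ x j + -(mnv hn (fun j => x j - y j)) := by
      intro j
      have := mnv_le hn (fun j => x j - y j) j
      linarith
    have := hmono y (fun j => x j + -(mnv hn (fun j => x j - y j))) h1 i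
    rw [hadd] at this
    linarith
  have omv_G : ∀ x y : Fin n → ℝ,
      omv hn (fun i => G x i - G y i) ≤ omv hn (fun i => x i - y i) := by
    intro x y
    have h1 : mxv hn (fun i => G x i - G y i) ≤ mxv hn (fun i => x i - y i) :=
      mxv_le hn _ _ fun i => hup x y i
    have h2 : mnv hn (fun i => x i - y i) ≤ mnv hn (fun i => G x i - G y i) :=
      le_mnv hn _ _ fun i => hdn x y i
    simp only [omv]; linarith
  have omv_T : ∀ x y : Fin n → ℝ,
      omv hn (fun i => (G x i - G x i0) - (G y i - G y i0)) ≤ omv hn (fun i => x i - y i) := by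
    intro x y
    have he : (fun i => (G x i - G x i0) - (G y i - G y i0))
        = (fun i => (G x i - G y i) + (G y i0 - G x i0)) := by
      funext i; ring
    rw [he, omv_const_shift hn (fun i => G x i - G y i) (G y i0 - G x i0)]
    exact omv_G x y
  -- the orbit
  set x : ℕ → Fin n → ℝ :=
    fun k => Nat.rec (fun _ => 0) (fun _ xk i => G xk i - G xk i0) k with hxdef
  have hxs : ∀ k, x (k + 1) = fun i => G (x k) i - G (x k) i0 := fun k => rfl
  have hS : ∀ k, x k i0 = 0 ∧ (∀ i, lam ≤ G (x k) i - x k i) ∧ (∀ i, G (x k) i - x k i ≤ mu) := by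
    intro k
    induction k with
    | zero =>
      have hx0 : x 0 = fun _ => (0:ℝ) := rfl
      refine ⟨rfl, fun i => ?_, fun i => ?_⟩
      · rw [hx0]; have := hlam i; simpa using this
      · rw [hx0]; have := hmu i; simpa using this
    | succ k ih =>
      obtain ⟨hu0, hul, huu⟩ := ih
      have hGx : ∀ i, G (x (k+1)) i = G (G (x k)) i - G (x k) i0 := by
        intro i
        have he : x (k + 1) = fun j => G (x k) j + -(G (x k) i0) := by
          rw [hxs k]; funext j; ring
        rw [he, hadd]; ring
      have hlow : ∀ i, G (x k) i + lam ≤ G (G (x k)) i := by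
        intro i
        have h1 : ∀ j, x k j + lam ≤ G (x k) j := fun j => by have := hul j; linarith
        have := hmono (fun j => x k j + lam) (G (x k)) h1 i
        rw [hadd] at this
        linarith
      have hhigh : ∀ i, G (G (x k)) i ≤ G (x k) i + mu := by
        intro i
        have h1 : ∀ j, G (x k) j ≤ x k j + mu := fun j => by have := huu j; linarith
        have := hmono (G (x k)) (fun j => x k j + mu) h1 i
        rw [hadd] at this
        linarith
      refine ⟨by rw [hxs k]; ring, fun i => ?_, fun i => ?_⟩
      · rw [hGx i, hxs k]
        have := hlow i; simp only; linarith
      · rw [hGx i, hxs k]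
        have := hhigh i; simp only; linarith
  have hxb : ∀ k i, |x k i| ≤ R := fun k i => hR (x k) (hS k).1 (hS k).2.1 (hS k).2.2 i
  have hRnn : 0 ≤ R := le_trans (abs_nonneg _) (hxb 0 i0)
  set R2 : ℝ := 2 * R with hR2
  have homvx : ∀ k, omv hn (x k) ≤ R2 := by
    intro k
    have h1 : mxv hn (x k) ≤ R := mxv_le hn _ _ fun i => le_trans (le_abs_self _) (hxb k i)
    have h2 : -R ≤ mnv hn (x k) := le_mnv hn _ _ fun i => by
      have := hxb k i; have := neg_abs_le (x k i); linarith
    simp only [omv, hR2]; linarith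
  -- rho and r
  have hbdd : ∀ (m : ℕ) (y : Fin n → ℝ),
      BddAbove (Set.range (fun k => omv hn (fun i => y i - x (m + k) i))) := by
    intro m y
    refine ⟨omv hn y + R2, ?_⟩
    rintro _ ⟨k, rfl⟩
    exact le_trans (omv_sub_le hn y (x (m + k))) (by have := homvx (m+k); linarith)
  set ρ : ℕ → (Fin n → ℝ) → ℝ :=
    fun m y => ⨆ k : ℕ, omv hn (fun i => y i - x (m + k) i) with hρdef
  have hle_ρ : ∀ (y : Fin n → ℝ) (m k : ℕ),
      omv hn (fun i => y i - x (m + k) i) ≤ ρ m y := fun y m k => le_ciSup (hbdd m y) k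
  have hρ_le : ∀ (y : Fin n → ℝ) (m : ℕ) (c : ℝ),
      (∀ k, omv hn (fun i => y i - x (m + k) i) ≤ c) → ρ m y ≤ c :=
    fun y m c h => ciSup_le h
  have hρnn : ∀ (y : Fin n → ℝ) (m : ℕ), 0 ≤ ρ m y :=
    fun y m => le_trans (omv_nonneg hn _) (hle_ρ y m 0)
  set r : (Fin n → ℝ) → ℝ := fun y => ⨅ m : ℕ, ρ m y with hrdef
  have hr_le : ∀ (y : Fin n → ℝ) (m : ℕ), r y ≤ ρ m y := by
    intro y m
    exact ciInf_le ⟨0, by rintro _ ⟨m', rfl⟩; exact hρnn y m'⟩ m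
  have hle_r : ∀ (y : Fin n → ℝ) (c : ℝ), (∀ m, c ≤ ρ m y) → c ≤ r y :=
    fun y c h => le_ciInf h
  -- r (T y) ≤ r y
  have hrT : ∀ y : Fin n → ℝ, r (fun i => G y i - G y i0) ≤ r y := by
    intro y
    refine hle_r y _ fun m => ?_
    refine le_trans (hr_le _ (m + 1)) ?_
    refine hρ_le _ (m + 1) _ fun k => ?_
    have hidx : m + 1 + k = (m + k) + 1 := by omega
    have he : (fun i => (G y i - G y i0) - x (m + 1 + k) i)
        = (fun i => (G y i - G y i0) - (G (x (m + k)) i - G (x (m + k)) i0)) := by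
      funext i; rw [hidx, hxs (m + k)]
    rw [he]
    exact le_trans (omv_T y (x (m + k))) (hle_ρ y m k)
  -- key bound for scaled fixed points
  have hrs : ∀ (y : Fin n → ℝ) (s : ℝ), 0 < s → s < 1 →
      (∀ i, y i = s * (G y i - G y i0)) → omv hn y ≤ 2 * R2 := by
    intro y s hs0 hs1 hfix
    have step1 : ∀ m, ρ m y ≤ s * ρ m (fun i => G y i - G y i0) + (1 - s) * R2 := by
      intro m
      refine hρ_le y m _ fun k => ?_
      have he : (fun i => y i - x (m + k) i)
          = (fun i => s * ((G y i - G y i0) - x (m + k) i) + (1 - s) * (-(x (m + k) i))) := by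
        funext i
        have := hfix i
        ring_nf
        ring_nf at this
        linarith
      rw [he]
      have h1 := omv_add_le hn (fun i => s * ((G y i - G y i0) - x (m + k) i))
        (fun i => (1 - s) * (-(x (m + k) i)))
      have h2 : omv hn (fun i => s * ((G y i - G y i0) - x (m + k) i))
          = s * omv hn (fun i => (G y i - G y i0) - x (m + k) i) :=
        omv_smul hn s (le_of_lt hs0) _
      have h3 : omv hn (fun i => (1 - s) * (-(x (m + k) i)))
          = (1 - s) * omv hn (fun i => -(x (m + k) i)) :=
        omv_smul hn (1 - s) (by linarith) _
      have h4 : omv hn (fun i => -(x (m + k) i)) = omv hn (x (m + k)) := by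
        have := omv_neg hn (x (m + k))
        simpa using this
      have h5 : omv hn (fun i => (G y i - G y i0) - x (m + k) i) ≤ ρ m (fun i => G y i - G y i0) :=
        hle_ρ _ m k
      have h6 := homvx (m + k)
      calc omv hn (fun i => s * ((G y i - G y i0) - x (m + k) i) + (1 - s) * (-(x (m + k) i)))
          ≤ _ + _ := h1
        _ ≤ s * ρ m (fun i => G y i - G y i0) + (1 - s) * R2 := by
            rw [h2, h3, h4]
            have := mul_le_mul_of_nonneg_left h5 (le_of_lt hs0)
            have := mul_le_mul_of_nonneg_left h6 (by linarith : (0:ℝ) ≤ 1 - s)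
            linarith
    have step2 : r y ≤ s * r (fun i => G y i - G y i0) + (1 - s) * R2 := by
      have hall : ∀ m, (r y - (1 - s) * R2) / s ≤ ρ m (fun i => G y i - G y i0) := by
        intro m
        rw [div_le_iff₀ hs0]
        have := le_trans (hr_le y m) (step1 m)
        linarith
      have := hle_r (fun i => G y i - G y i0) _ hall
      rw [div_le_iff₀ hs0] at this
      linarith
    have step3 : r y ≤ s * r y + (1 - s) * R2 := by
      have := mul_le_mul_of_nonneg_left (hrT y) (le_of_lt hs0)
      linarith
    have step4 : r y ≤ R2 := by nlinarith
    have step5 : omv hn y ≤ r y + R2 := by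
      have hall : ∀ m, omv hn y - R2 ≤ ρ m y := by
        intro m
        have he : omv hn y = omv hn (fun i => (y i - x (m + 0) i) + x (m + 0) i) := by
          congr 1; funext i; ring
        have h1 := omv_add_le hn (fun i => y i - x (m + 0) i) (x (m + 0))
        have h2 := hle_ρ y m 0
        have h3 := homvx (m + 0)
        rw [he]; linarith
      have := hle_r y _ hall
      linarith
    linarith
  -- sequence of scaled fixed points
  set σ : ℕ → ℝ := fun k => 1 - 1 / ((k : ℝ) + 2) with hσdef
  have hσ0 : ∀ k, 0 < σ k := by
    intro k
    have h2 : (2:ℝ) ≤ (k : ℝ) + 2 := by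
      have : (0:ℝ) ≤ (k:ℝ) := Nat.cast_nonneg k
      linarith
    have := one_div_le_one_div_of_le (by norm_num : (0:ℝ) < 2) h2
    simp only [hσdef]; linarith
  have hσ1 : ∀ k, σ k < 1 := by
    intro k
    have : 0 < 1 / ((k : ℝ) + 2) := by positivity
    simp only [hσdef]; linarith
  have hYex : ∀ k : ℕ, ∃ y : Fin n → ℝ, y i0 = 0 ∧ ∀ i, y i = σ k * (G y i - G y i0) :=
    fun k => scaled_fixed hn G hmono hadd (σ k) (hσ0 k) (hσ1 k)
  choose Y hY0 hYfix using hYex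
  have hYb : ∀ k i, |Y k i| ≤ 2 * R2 := by
    intro k i
    have := hrs (Y k) (σ k) (hσ0 k) (hσ1 k) (hYfix k)
    exact le_trans (abs_le_omv hn (Y k) i0 (hY0 k) i) this
  -- Bolzano–Weierstrass
  have hR2nn : (0:ℝ) ≤ 2 * R2 := by simp only [hR2]; linarith
  have hmem : ∀ k, Y k ∈ Metric.closedBall (0 : Fin n → ℝ) (2 * R2) := by
    intro k
    rw [Metric.mem_closedBall, dist_zero_right]
    rw [pi_norm_le_iff_of_nonneg hR2nn]
    intro i
    rw [Real.norm_eq_abs]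
    exact hYb k i
  obtain ⟨a, -, φ, hφ, hconv⟩ :=
    (isCompact_closedBall (0 : Fin n → ℝ) (2 * R2)).tendsto_subseq hmem
  have hcoord : ∀ i, Tendsto (fun k => Y (φ k) i) atTop (nhds (a i)) := by
    intro i
    exact (tendsto_pi_nhds.1 hconv) i
  have hai0 : a i0 = 0 := by
    refine tendsto_nhds_unique (hcoord i0) ?_
    simp only [hY0]
    exact tendsto_const_nhds
  -- show T a = a
  set w : Fin n → ℝ := fun i => (G a i - G a i0) - a i with hwdef
  have hwi0 : w i0 = 0 := by simp only [hwdef, hai0]; ring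
  set M : ℝ := 2 * R2 + omv hn (fun i => G (fun _ => (0:ℝ)) i - G (fun _ => (0:ℝ)) i0) with hM
  have hbound : ∀ k, omv hn w ≤
      2 * omv hn (fun i => Y (φ k) i - a i) + (1 - σ (φ k)) * M := by
    intro k
    set u : Fin n → ℝ := Y (φ k) with hu
    have he : w = fun i =>
        ((G a i - G a i0) - (G u i - G u i0)) + (((G u i - G u i0) - u i) + (u i - a i)) := by
      funext i; simp only [hwdef]; ring
    have h1 := omv_add_le hn (fun i => (G a i - G a i0) - (G u i - G u i0))
      (fun i => ((G u i - G u i0) - u i) + (u i - a i))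
    have h2 := omv_add_le hn (fun i => (G u i - G u i0) - u i) (fun i => u i - a i)
    have h3 : omv hn (fun i => (G a i - G a i0) - (G u i - G u i0))
        ≤ omv hn (fun i => a i - u i) := omv_T a u
    have h3' : omv hn (fun i => a i - u i) = omv hn (fun i => u i - a i) := by
      rw [show (fun i => a i - u i) = (fun i => -((fun j => u j - a j) i)) from by
        funext i; ring]
      exact omv_neg hn _
    have h4 : omv hn (fun i => (G u i - G u i0) - u i)
        = (1 - σ (φ k)) * omv hn (fun i => G u i - G u i0) := by
      have he2 : (fun i => (G u i - G u i0) - u i)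
          = (fun i => (1 - σ (φ k)) * (G u i - G u i0)) := by
        funext i
        have := hYfix (φ k) i
        simp only [hu]; linarith
      rw [he2]
      exact omv_smul hn _ (by have := hσ1 (φ k); linarith) _
    have h5 : omv hn (fun i => G u i - G u i0) ≤ M := by
      have he3 : (fun i => G u i - G u i0)
          = (fun i => ((G u i - G u i0) - (G (fun _ => (0:ℝ)) i - G (fun _ => (0:ℝ)) i0))
              + (G (fun _ => (0:ℝ)) i - G (fun _ => (0:ℝ)) i0)) := by
        funext i; ring
      rw [he3]
      have h6 := omv_add_le hn
        (fun i => (G u i - G u i0) - (G (fun _ => (0:ℝ)) i - G (fun _ => (0:ℝ)) i0))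
        (fun i => G (fun _ => (0:ℝ)) i - G (fun _ => (0:ℝ)) i0)
      have h7 : omv hn (fun i => (G u i - G u i0) - (G (fun _ => (0:ℝ)) i - G (fun _ => (0:ℝ)) i0))
          ≤ omv hn (fun i => u i - (fun _ => (0:ℝ)) i) := omv_T u (fun _ => 0)
      have h8 : omv hn (fun i => u i - (fun _ => (0:ℝ)) i) = omv hn u := by
        congr 1
        funext i
        simp
      have h9 : omv hn u ≤ 2 * R2 :=
        hrs (Y (φ k)) (σ (φ k)) (hσ0 (φ k)) (hσ1 (φ k)) (hYfix (φ k))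
      simp only [hM]; linarith
    have hσnn : (0:ℝ) ≤ 1 - σ (φ k) := by have := hσ1 (φ k); linarith
    have hMnn : 0 ≤ omv hn (fun i => G u i - G u i0) := omv_nonneg hn _
    rw [he]
    calc omv hn (fun i =>
        ((G a i - G a i0) - (G u i - G u i0)) + (((G u i - G u i0) - u i) + (u i - a i)))
        ≤ _ + _ := h1
      _ ≤ 2 * omv hn (fun i => Y (φ k) i - a i) + (1 - σ (φ k)) * M := by
          have := mul_le_mul_of_nonneg_left h5 hσnn
          simp only [hu] at *
          linarith [h2, h3, h3', h4]
  have htot : Tendsto (fun k => 2 * omv hn (fun i => Y (φ k) i - a i) + (1 - σ (φ k)) * M)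
      atTop (nhds 0) := by
    have homv0 : Tendsto (fun k => omv hn (fun i => Y (φ k) i - a i)) atTop (nhds 0) := by
      apply tendsto_omv_zero hn
      intro i
      have := (hcoord i).sub (tendsto_const_nhds : Tendsto (fun _ : ℕ => a i) atTop _)
      simpa using this
    have hinv : Tendsto (fun k => 1 - σ (φ k)) atTop (nhds 0) := by
      have hbig : Tendsto (fun k : ℕ => ((k : ℝ) + 2)) atTop atTop :=
        tendsto_atTop_add_const_right atTop 2 tendsto_natCast_atTop_atTop
      have hzero : Tendsto (fun k : ℕ => 1 / ((k : ℝ) + 2)) atTop (nhds 0) := by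
        simp only [one_div]; exact hbig.inv_tendsto_atTop
      have hcomp : ∀ k, 1 - σ (φ k) ≤ 1 / ((k : ℝ) + 2) := by
        intro k
        have hφk : (k : ℝ) ≤ (φ k : ℝ) := by exact_mod_cast hφ.le_apply
        have : 1 / ((φ k : ℝ) + 2) ≤ 1 / ((k : ℝ) + 2) :=
          one_div_le_one_div_of_le (by positivity) (by linarith)
        simp only [hσdef]; linarith
      have hnn : ∀ k, 0 ≤ 1 - σ (φ k) := fun k => by have := hσ1 (φ k); linarith
      exact squeeze_zero hnn hcomp hzero
    have := (homv0.const_mul 2).add (hinv.mul_const M)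
    simpa using this
  have homw : omv hn w ≤ 0 := ge_of_tendsto' htot hbound
  have homw0 : omv hn w = 0 := le_antisymm homw (omv_nonneg hn w)
  refine ⟨a, fun i => ?_⟩
  have := abs_le_omv hn w i0 hwi0 i
  rw [homw0] at this
  have hwi : w i = 0 := by
    have := abs_le.1 this; cases this; linarith
  simp only [hwdef] at hwi
  linarith

end Stmt17Aux

open Filter Real Set Stmt17Aux Classical in
theorem stmt17 (n : ℕ) (hn : 1 ≤ n)
    (f : (Fin n → ℝ) → (Fin n → ℝ))
    (hpos : ∀ x, (∀ i, 0 < x i) → ∀ i, 0 < f x i)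
    (hmono : ∀ x y, (∀ i, 0 < x i) → (∀ i, 0 < y i) → x ≤ y → f x ≤ f y)
    (hhom : ∀ t : ℝ, 0 < t → ∀ x, (∀ i, 0 < x i) → f (t • x) = t • f x) :
    (¬ ∃ I J : Set (Fin n),
        Disjoint I J ∧ MultMinDominion n f I ∧ MultMaxDominion n f J) ↔
    (∀ d : Fin n → ℝ, (∀ i, 0 < d i) →
        ∃ lam : ℝ, 0 < lam ∧ ∃ u : Fin n → ℝ, (∀ i, 0 < u i) ∧
          ∀ i, d i * f u i = lam * u i) := by
  have hn0 : 0 < n := hn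
  set i0 : Fin n := ⟨0, hn0⟩ with hi0def
  constructor
  · -- (a) → (b)
    intro ha d hd
    set G : (Fin n → ℝ) → Fin n → ℝ :=
      fun x i => Real.log (d i * f (fun j => Real.exp (x j)) i) with hGdef
    have hfpos : ∀ x : Fin n → ℝ, ∀ i, 0 < f (fun j => Real.exp (x j)) i :=
      fun x => hpos _ (fun j => Real.exp_pos _)
    have hdfpos : ∀ x : Fin n → ℝ, ∀ i, 0 < d i * f (fun j => Real.exp (x j)) i :=
      fun x i => mul_pos (hd i) (hfpos x i)
    have hGexp : ∀ x : Fin n → ℝ, ∀ i, Real.exp (G x i) = d i * f (fun j => Real.exp (x j)) i :=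
      fun x i => Real.exp_log (hdfpos x i)
    have hGmono : ∀ x y : Fin n → ℝ, (∀ i, x i ≤ y i) → ∀ i, G x i ≤ G y i := by
      intro x y hxy i
      have hfle := hmono (fun j => Real.exp (x j)) (fun j => Real.exp (y j))
        (fun j => Real.exp_pos _) (fun j => Real.exp_pos _)
        (fun j => Real.exp_le_exp.2 (hxy j))
      exact Real.log_le_log (hdfpos x i)
        (mul_le_mul_of_nonneg_left (hfle i) (hd i).le)
    have hGadd : ∀ (c : ℝ) (x : Fin n → ℝ) (i : Fin n),
        G (fun j => x j + c) i = G x i + c := by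
      intro c x i
      have he : (fun j => Real.exp (x j + c)) = Real.exp c • (fun j => Real.exp (x j)) := by
        funext j
        simp only [Pi.smul_apply, smul_eq_mul, Real.exp_add]
        ring
      have h1 : f (fun j => Real.exp (x j + c)) i
          = Real.exp c * f (fun j => Real.exp (x j)) i := by
        rw [he, hhom (Real.exp c) (Real.exp_pos c) _ (fun j => Real.exp_pos _)]
        simp only [Pi.smul_apply, smul_eq_mul]
      simp only [hGdef, h1]
      rw [show d i * (Real.exp c * f (fun j => Real.exp (x j)) i)
          = Real.exp c * (d i * f (fun j => Real.exp (x j)) i) from by ring]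
      rw [Real.log_mul (Real.exp_ne_zero c) (ne_of_gt (hdfpos x i)), Real.log_exp]
      ring
    set lam : ℝ := mnv hn0 (G (fun _ => 0)) with hlamdef
    set mu : ℝ := mxv hn0 (G (fun _ => 0)) with hmudef
    by_cases hbd : ∃ R : ℝ, ∀ x : Fin n → ℝ, x i0 = 0 → (∀ i, lam ≤ G x i - x i) →
        (∀ i, G x i - x i ≤ mu) → ∀ i, |x i| ≤ R
    · -- bounded slice: eigenvector exists
      obtain ⟨R, hR⟩ := hbd
      obtain ⟨v, hv⟩ := eigen_of_bounded hn0 G hGmono hGadd lam mu R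
        (fun i => mnv_le hn0 _ i) (fun i => le_mxv hn0 _ i) hR
      refine ⟨Real.exp (G v i0), Real.exp_pos _, fun i => Real.exp (v i),
        fun i => Real.exp_pos _, fun i => ?_⟩
      have h1 := hGexp v i
      rw [hv i, Real.exp_add] at h1
      rw [← h1]; ring
    · -- unbounded slice: construct dominions, contradiction
      exfalso
      apply ha
      push_neg at hbd
      have hxx : ∀ m : ℕ, ∃ x : Fin n → ℝ, x i0 = 0 ∧ (∀ i, lam ≤ G x i - x i) ∧
          (∀ i, G x i - x i ≤ mu) ∧ ∃ i, (m : ℝ) < |x i| := by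
        intro m
        obtain ⟨x, hx1, hx2⟩ := hbd (m : ℝ)
        exact ⟨x, hx1, hx2.1, hx2.2.1, hx2.2.2⟩
      choose xx hxx0 hxxl hxxu hxxb using hxx
      -- gap grows
      have hgap : ∀ m : ℕ, (m : ℝ) < mxv hn0 (xx m) - mnv hn0 (xx m) := by
        intro m
        obtain ⟨i, hi⟩ := hxxb m
        have hmx0 : 0 ≤ mxv hn0 (xx m) := by
          have := le_mxv hn0 (xx m) i0; rw [hxx0 m] at this; linarith
        have hmn0 : mnv hn0 (xx m) ≤ 0 := by
          have := mnv_le hn0 (xx m) i0; rw [hxx0 m] at this; linarith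
        rcases abs_cases (xx m i) with ⟨he, -⟩ | ⟨he, -⟩
        · have := le_mxv hn0 (xx m) i; rw [he] at hi; linarith
        · have := mnv_le hn0 (xx m) i; rw [he] at hi; linarith
      -- first extraction (top coordinates)
      obtain ⟨J, AJ, φ1, hφ1, hJne, hJbd, hJtd⟩ := ext1 hn0
        (fun m i => xx m i - mxv hn0 (xx m))
        (fun m i => by have := le_mxv hn0 (xx m) i; linarith)
        (fun m => by
          obtain ⟨i, hi⟩ := exists_mxv hn0 (xx m)
          exact ⟨i, by linarith⟩)
      -- second extraction (bottom coordinates)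
      obtain ⟨I, AI, φ2, hφ2, hIne, hIbd, hItd⟩ := ext1 hn0
        (fun m i => -(xx (φ1 m) i - mnv hn0 (xx (φ1 m))))
        (fun m i => by have := mnv_le hn0 (xx (φ1 m)) i; linarith)
        (fun m => by
          obtain ⟨i, hi⟩ := exists_mnv hn0 (xx (φ1 m))
          exact ⟨i, by linarith⟩)
      -- disjointness
      have hdisj : Disjoint I J := by
        rw [Set.disjoint_left]
        intro i hiI hiJ
        obtain ⟨m, hm⟩ := exists_nat_gt (AI + AJ)
        have h1 := hJbd i hiJ (φ2 m)
        have h2 := hIbd i hiI m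
        have h3 := hgap (φ1 (φ2 m))
        have h4 : (m : ℝ) ≤ ((φ1 (φ2 m)) : ℝ) := by
          have ha1 : m ≤ φ2 m := hφ2.le_apply
          have ha2 : φ2 m ≤ φ1 (φ2 m) := hφ1.le_apply
          exact_mod_cast le_trans ha1 ha2
        linarith
      have hmnd : 0 < mnv hn0 d := by
        obtain ⟨i, hi⟩ := exists_mnv hn0 d
        rw [hi]; exact hd i
      have hmxd : 0 < mxv hn0 d := lt_of_lt_of_le hmnd (mnv_le_mxv hn0 d)
      refine ⟨I, J, hdisj, ⟨hIne, Real.exp (AI + mu) / mnv hn0 d, ?_⟩,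
        ⟨hJne, Real.exp (-AJ + lam) / mxv hn0 d, by positivity, ?_⟩⟩
      · -- MIN dominion for I
        intro i hiI t ht
        -- pick m with all coordinates outside I large
        have hex : ∀ k : Fin n, ∃ Mk : ℕ, k ∉ I → ∀ m, Mk ≤ m →
            t ≤ xx (φ1 (φ2 m)) k - mnv hn0 (xx (φ1 (φ2 m))) := by
          intro k
          by_cases hk : k ∈ I
          · exact ⟨0, fun h => absurd hk h⟩
          · have := hItd k hk
            rw [tendsto_atBot] at this
            have h2 := this (-t)
            rw [eventually_atTop] at h2
            obtain ⟨Mk, hMk⟩ := h2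
            refine ⟨Mk, fun _ m hm => ?_⟩
            have := hMk m hm
            linarith
        choose Mk hMk using hex
        set m : ℕ := Finset.univ.sup Mk with hmdef
        set p : ℕ := φ1 (φ2 m) with hpdef
        -- comparison vector
        have hcomp : ∀ k, Iᶜ.indicator (fun _ => t) k ≤ xx p k - mnv hn0 (xx p) := by
          intro k
          by_cases hk : k ∈ I
          · rw [Set.indicator_of_notMem (by simpa using hk)]
            have := mnv_le hn0 (xx p) k; linarith
          · rw [Set.indicator_of_mem (by simpa using hk)]
            exact hMk k hk m (Finset.le_sup (Finset.mem_univ k))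
        have hGle : G (fun k => Iᶜ.indicator (fun _ => t) k) i ≤ AI + mu := by
          have h1 := hGmono _ _ hcomp i
          have h2 : G (fun k => xx p k - mnv hn0 (xx p)) i
              = G (xx p) i - mnv hn0 (xx p) := by
            rw [show (fun k => xx p k - mnv hn0 (xx p))
                = (fun k => xx p k + (-(mnv hn0 (xx p)))) from by funext k; ring]
            rw [hGadd]; ring
          have h3 := hxxu p i
          have h4 := hIbd i hiI m
          linarith
        have hfe : f (fun j => Real.exp (Iᶜ.indicator (fun _ => t) j)) i
            = Real.exp (G (fun k => Iᶜ.indicator (fun _ => t) k) i) / d i := by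
          have h0 := hGexp (fun k => Iᶜ.indicator (fun _ => t) k) i
          rw [h0, mul_div_cancel_left₀ _ (ne_of_gt (hd i))]
        rw [hfe]
        have h5 : Real.exp (G (fun k => Iᶜ.indicator (fun _ => t) k) i)
            ≤ Real.exp (AI + mu) := Real.exp_le_exp.2 hGle
        have h6 : mnv hn0 d ≤ d i := mnv_le hn0 d i
        calc Real.exp (G (fun k => Iᶜ.indicator (fun _ => t) k) i) / d i
            ≤ Real.exp (AI + mu) / d i := (div_le_div_iff_of_pos_right (hd i)).2 h5
          _ ≤ Real.exp (AI + mu) / mnv hn0 d :=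
              div_le_div_of_nonneg_left (Real.exp_pos _).le hmnd h6
      · -- MAX dominion for J
        intro i hiJ t ht
        have hex : ∀ k : Fin n, ∃ Mk : ℕ, k ∉ J → ∀ m, Mk ≤ m →
            xx (φ1 m) k - mxv hn0 (xx (φ1 m)) ≤ -t := by
          intro k
          by_cases hk : k ∈ J
          · exact ⟨0, fun h => absurd hk h⟩
          · have := hJtd k hk
            rw [tendsto_atBot] at this
            have h2 := this (-t)
            rw [eventually_atTop] at h2
            obtain ⟨Mk, hMk⟩ := h2
            exact ⟨Mk, fun _ m hm => hMk m hm⟩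
        choose Mk hMk using hex
        set m : ℕ := Finset.univ.sup Mk with hmdef
        set p : ℕ := φ1 m with hpdef
        have hcomp : ∀ k, xx p k - mxv hn0 (xx p) ≤ Jᶜ.indicator (fun _ => -t) k := by
          intro k
          by_cases hk : k ∈ J
          · rw [Set.indicator_of_notMem (by simpa using hk)]
            have := le_mxv hn0 (xx p) k; linarith
          · rw [Set.indicator_of_mem (by simpa using hk)]
            exact hMk k hk m (Finset.le_sup (Finset.mem_univ k))
        have hGge : -AJ + lam ≤ G (fun k => Jᶜ.indicator (fun _ => -t) k) i := by
          have h1 := hGmono _ _ hcomp i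
          have h2 : G (fun k => xx p k - mxv hn0 (xx p)) i
              = G (xx p) i - mxv hn0 (xx p) := by
            rw [show (fun k => xx p k - mxv hn0 (xx p))
                = (fun k => xx p k + (-(mxv hn0 (xx p)))) from by funext k; ring]
            rw [hGadd]; ring
          have h3 := hxxl p i
          have h4 := hJbd i hiJ m
          linarith
        have hfe : f (fun j => Real.exp (Jᶜ.indicator (fun _ => -t) j)) i
            = Real.exp (G (fun k => Jᶜ.indicator (fun _ => -t) k) i) / d i := by
          have h0 := hGexp (fun k => Jᶜ.indicator (fun _ => -t) k) i
          rw [h0, mul_div_cancel_left₀ _ (ne_of_gt (hd i))]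
        rw [hfe]
        have h5 : Real.exp (-AJ + lam)
            ≤ Real.exp (G (fun k => Jᶜ.indicator (fun _ => -t) k) i) := Real.exp_le_exp.2 hGge
        have h6 : d i ≤ mxv hn0 d := le_mxv hn0 d i
        calc Real.exp (-AJ + lam) / mxv hn0 d
            ≤ Real.exp (-AJ + lam) / d i :=
              div_le_div_of_nonneg_left (Real.exp_pos _).le (hd i) h6
          _ ≤ Real.exp (G (fun k => Jᶜ.indicator (fun _ => -t) k) i) / d i :=
              (div_le_div_iff_of_pos_right (hd i)).2 h5
  · -- (b) → (a)
    intro hbb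
    rintro ⟨I, J, hdisj, ⟨hIne, C, hC⟩, ⟨hJne, c, hc0, hc⟩⟩
    set C' : ℝ := max C 1 with hC'def
    have hC'pos : (0:ℝ) < C' := lt_of_lt_of_le one_pos (le_max_right _ _)
    have hC'le : ∀ i ∈ I, ∀ t : ℝ, 0 ≤ t →
        f (fun j => Real.exp (Iᶜ.indicator (fun _ => t) j)) i ≤ C' :=
      fun i hi t ht => le_trans (hC i hi t ht) (le_max_left _ _)
    set ε : ℝ := c / (2 * C') with hεdef
    have hεpos : 0 < ε := div_pos hc0 (by positivity)
    set d : Fin n → ℝ := fun i => if i ∈ I then ε else 1 with hddef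
    have hdpos : ∀ i, 0 < d i := by
      intro i
      simp only [hddef]
      split_ifs
      · exact hεpos
      · exact one_pos
    obtain ⟨lam, hlampos, u, hu, heig⟩ := hbb d hdpos
    -- MAX estimate: c ≤ lam
    have hlow : c ≤ lam := by
      obtain ⟨j0, hj0J, hj0min⟩ := Set.exists_min_image J u (Set.toFinite J) hJne
      have hβpos : 0 < u j0 := hu j0
      have hδpos : 0 < mnv hn0 u := by
        obtain ⟨i, hi⟩ := exists_mnv hn0 u
        rw [hi]; exact hu i
      set t1 : ℝ := max 0 (-(Real.log (mnv hn0 u / u j0))) with ht1def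
      have ht1 : 0 ≤ t1 := le_max_left _ _
      have hexp1 : Real.exp (-t1) ≤ mnv hn0 u / u j0 := by
        have h1 : -t1 ≤ Real.log (mnv hn0 u / u j0) := by
          have := le_max_right (0:ℝ) (-(Real.log (mnv hn0 u / u j0)))
          simp only [ht1def] at *
          linarith
        calc Real.exp (-t1) ≤ Real.exp (Real.log (mnv hn0 u / u j0)) := Real.exp_le_exp.2 h1
          _ = mnv hn0 u / u j0 := Real.exp_log (div_pos hδpos hβpos)
      have hle1 : (fun k => Real.exp (Jᶜ.indicator (fun _ => -t1) k)) ≤ (u j0)⁻¹ • u := by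
        intro k
        show Real.exp (Jᶜ.indicator (fun _ => -t1) k) ≤ (u j0)⁻¹ * u k
        rw [show (u j0)⁻¹ * u k = u k / u j0 from by ring]
        by_cases hk : k ∈ J
        · rw [Set.indicator_of_notMem (by simpa using hk), Real.exp_zero]
          exact (one_le_div hβpos).2 (hj0min k hk)
        · rw [Set.indicator_of_mem (by simpa using hk)]
          refine le_trans hexp1 ?_
          exact (div_le_div_iff_of_pos_right hβpos).2 (mnv_le hn0 u k)
      have hmle := hmono _ _ (fun k => Real.exp_pos _)
        (fun k => by
          show 0 < (u j0)⁻¹ * u k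
          exact mul_pos (inv_pos.2 hβpos) (hu k)) hle1
      rw [hhom (u j0)⁻¹ (inv_pos.2 hβpos) u hu] at hmle
      have h1 : c ≤ (u j0)⁻¹ * f u j0 := by
        refine le_trans (hc j0 hj0J t1 ht1) ?_
        have := hmle j0
        simpa [Pi.smul_apply, smul_eq_mul] using this
      have hdj0 : d j0 = 1 := by
        simp only [hddef]
        exact if_neg (Set.disjoint_right.1 hdisj hj0J)
      have hfj0 : f u j0 = lam * u j0 := by
        have := heig j0; rw [hdj0] at this; linarith
      rw [hfj0] at h1
      rw [show (u j0)⁻¹ * (lam * u j0) = lam from by field_simp] at h1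
      exact h1
    -- MIN estimate: lam ≤ C' * ε
    have hhigh : lam ≤ C' * ε := by
      obtain ⟨i1, hi1I, hi1max⟩ := Set.exists_max_image I u (Set.toFinite I) hIne
      have hγpos : 0 < u i1 := hu i1
      have hMxpos : 0 < mxv hn0 u := by
        obtain ⟨i, hi⟩ := exists_mxv hn0 u
        rw [hi]; exact hu i
      set t2 : ℝ := max 0 (Real.log (mxv hn0 u / u i1)) with ht2def
      have ht2 : 0 ≤ t2 := le_max_left _ _
      have hexp2 : mxv hn0 u / u i1 ≤ Real.exp t2 := by
        have h1 : Real.log (mxv hn0 u / u i1) ≤ t2 := le_max_right _ _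
        calc mxv hn0 u / u i1 = Real.exp (Real.log (mxv hn0 u / u i1)) :=
              (Real.exp_log (div_pos hMxpos hγpos)).symm
          _ ≤ Real.exp t2 := Real.exp_le_exp.2 h1
      have hle2 : (u i1)⁻¹ • u ≤ (fun k => Real.exp (Iᶜ.indicator (fun _ => t2) k)) := by
        intro k
        show (u i1)⁻¹ * u k ≤ Real.exp (Iᶜ.indicator (fun _ => t2) k)
        rw [show (u i1)⁻¹ * u k = u k / u i1 from by ring]
        by_cases hk : k ∈ I
        · rw [Set.indicator_of_notMem (by simpa using hk), Real.exp_zero]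
          exact (div_le_one hγpos).2 (hi1max k hk)
        · rw [Set.indicator_of_mem (by simpa using hk)]
          refine le_trans ?_ hexp2
          exact (div_le_div_iff_of_pos_right hγpos).2 (le_mxv hn0 u k)
      have hmle := hmono _ _
        (fun k => by
          show 0 < (u i1)⁻¹ * u k
          exact mul_pos (inv_pos.2 hγpos) (hu k))
        (fun k => Real.exp_pos _) hle2
      rw [hhom (u i1)⁻¹ (inv_pos.2 hγpos) u hu] at hmle
      have h2 : (u i1)⁻¹ * f u i1 ≤ C' := by
        refine le_trans ?_ (hC'le i1 hi1I t2 ht2)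
        have := hmle i1
        simpa [Pi.smul_apply, smul_eq_mul] using this
      have hdi1 : d i1 = ε := by
        simp only [hddef]
        exact if_pos hi1I
      have hfi1 : f u i1 = lam * u i1 / ε := by
        have h := heig i1
        rw [hdi1] at h
        rw [eq_div_iff (ne_of_gt hεpos)]
        linear_combination h
      rw [hfi1] at h2
      rw [show (u i1)⁻¹ * (lam * u i1 / ε) = lam / ε from by
        field_simp] at h2
      rw [div_le_iff₀ hεpos] at h2
      linarith [h2]
    have : C' * ε = c / 2 := by
      simp only [hεdef]
      field_simp
    rw [this] at hhigh
    linarith
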